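/- If κ is a regular cardinal and L is a scattered linear order of cardinality κ, then either κ or its reverse order κ* embeds into L. -/

import Mathlib

open Cardinal

namespace Stmt0Aux

universe u

variable {L : Type u} [LinearOrder L]

open Classical in
noncomputable def seq (S : Set L) [Inhabited L] (o : Ordinal.{u}) : L :=
  if hT : {l | l ∈ S ∧ ∀ o' : Ordinal.{u}, o' < o → seq S o' < l}.Nonempty
  then hT.choose else default
termination_by o
decreasing_by all_goals assumption

lemma seq_spec (κ : Cardinal.{u}) (hreg : κ.IsRegular) [Inhabited L] (S : Set L)
    (hS : κ ≤ #S) (hsmall : ∀ s ∈ S, #{w ∈ S | w ≤ s} < κ) :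
    ∀ o < κ.ord, seq S o ∈ S ∧ ∀ o' < o, seq S o' < seq S o := by
  intro o
  induction o using Ordinal.induction with
  | h o IH =>
    intro ho
    have hT : {l | l ∈ S ∧ ∀ o' : Ordinal.{u}, o' < o → seq S o' < l}.Nonempty := by
      by_contra hemp
      rw [Set.not_nonempty_iff_eq_empty] at hemp
      have hsub : S ⊆ ⋃ (j : o.ToType),
          {w ∈ S | w ≤ seq S (((Ordinal.ToType.mk (o := o)).symm j : Set.Iio o) : Ordinal)} := by
        intro l hl
        have : l ∉ (∅ : Set L) := Set.notMem_empty l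
        rw [← hemp] at this
        simp only [Set.mem_setOf_eq, not_and, not_forall, not_lt] at this
        obtain ⟨j', hj', hle⟩ := this hl
        refine Set.mem_iUnion.2 ⟨(Ordinal.ToType.mk (o := o)) ⟨j', hj'⟩, ?_⟩
        simp only [OrderIso.symm_apply_apply, Set.mem_setOf_eq]
        exact ⟨hl, hle⟩
      have hlt : #(⋃ (j : o.ToType),
          {w ∈ S | w ≤ seq S (((Ordinal.ToType.mk (o := o)).symm j : Set.Iio o) : Ordinal)}) < κ := by
        refine lt_of_le_of_lt mk_iUnion_le_sum_mk ?_
        refine Cardinal.sum_lt_of_isRegular hreg ?_ ?_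
        · rw [Cardinal.mk_toType]
          exact Cardinal.lt_ord.mp ho
        · intro j
          set j' : Ordinal := (((Ordinal.ToType.mk (o := o)).symm j : Set.Iio o) : Ordinal) with hj'
          have hjo : j' < o := ((Ordinal.ToType.mk (o := o)).symm j).2
          have hmem : seq S j' ∈ S := (IH j' hjo (hjo.trans ho)).1
          exact hsmall _ hmem
      exact absurd (le_trans hS (Cardinal.mk_le_mk_of_subset hsub)) (not_le.mpr hlt)
    have : seq S o ∈ {l | l ∈ S ∧ ∀ o' : Ordinal.{u}, o' < o → seq S o' < l} := by
      rw [seq, dif_pos hT]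
      exact hT.choose_spec
    exact ⟨this.1, fun o' ho' => this.2 o' ho'⟩

lemma exists_strictMono (κ : Cardinal.{u}) (hreg : κ.IsRegular) [Inhabited L] (S : Set L)
    (hS : κ ≤ #S) (hsmall : ∀ s ∈ S, #{w ∈ S | w ≤ s} < κ) :
    ∃ f : κ.ord.ToType → L, StrictMono f := by
  refine ⟨fun x => seq S (((Ordinal.ToType.mk (o := κ.ord)).symm x : Set.Iio κ.ord) : Ordinal),
    fun x y hxy => ?_⟩
  have h1 := ((Ordinal.ToType.mk (o := κ.ord)).symm x).2
  have h2 := ((Ordinal.ToType.mk (o := κ.ord)).symm y).2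
  have hlt : (((Ordinal.ToType.mk (o := κ.ord)).symm x : Set.Iio κ.ord) : Ordinal) <
      (((Ordinal.ToType.mk (o := κ.ord)).symm y : Set.Iio κ.ord) : Ordinal) := by
    exact_mod_cast (Ordinal.ToType.mk (o := κ.ord)).symm.strictMono hxy
  exact (seq_spec κ hreg S hS hsmall _ h2).2 _ hlt

/-- The convex equivalence: `x` and `y` are equivalent iff the interval between them is small. -/
def rel (κ : Cardinal.{u}) (x y : L) : Prop := #(Set.uIcc x y) < κ

lemma rel_refl (κ : Cardinal.{u}) (hκ : ℵ₀ ≤ κ) (x : L) : rel κ x x := by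
  rw [rel, Set.uIcc_self, Cardinal.mk_singleton]
  exact lt_of_lt_of_le Cardinal.one_lt_aleph0 hκ

lemma rel_symm {κ : Cardinal.{u}} {x y : L} (h : rel κ x y) : rel κ y x := by
  rwa [rel, Set.uIcc_comm]

lemma rel_trans {κ : Cardinal.{u}} (hκ : ℵ₀ ≤ κ) {x y z : L}
    (h1 : rel κ x y) (h2 : rel κ y z) : rel κ x z := by
  rw [rel] at *
  calc #(Set.uIcc x z) ≤ #((Set.uIcc x y ∪ Set.uIcc y z : Set L)) :=
        Cardinal.mk_le_mk_of_subset Set.uIcc_subset_uIcc_union_uIcc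
    _ ≤ #(Set.uIcc x y) + #(Set.uIcc y z) := Cardinal.mk_union_le _ _
    _ < κ := Cardinal.add_lt_of_lt hκ h1 h2

lemma le_wd {κ : Cardinal.{u}} (hκ : ℵ₀ ≤ κ) {x y x' y' : L}
    (h1 : rel κ x x') (h2 : rel κ y y') (h : x ≤ y ∨ rel κ x y) :
    x' ≤ y' ∨ rel κ x' y' := by
  rcases h with h | h
  · by_cases hle : x' ≤ y'
    · exact Or.inl hle
    · push_neg at hle
      right
      rcases le_or_gt x' y with hxy | hxy
      · -- x' ≤ y : uIcc y' x' ⊆ uIcc y' y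
        have hsub : Set.uIcc x' y' ⊆ Set.uIcc y y' := by
          rw [Set.uIcc_comm x' y', Set.uIcc_of_le hle.le]
          intro w hw
          exact Set.mem_uIcc_of_ge hw.1 (le_trans hw.2 hxy)
        exact lt_of_le_of_lt (Cardinal.mk_le_mk_of_subset hsub) h2
      · -- y < x' : uIcc y' x' ⊆ uIcc y' y ∪ uIcc x x'
        have hsub : Set.uIcc x' y' ⊆ Set.uIcc y y' ∪ Set.uIcc x x' := by
          rw [Set.uIcc_comm x' y', Set.uIcc_of_le hle.le]
          intro w hw
          rcases le_or_gt w y with hwy | hwy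
          · exact Or.inl (Set.mem_uIcc_of_ge hw.1 hwy)
          · exact Or.inr (Set.mem_uIcc_of_le (le_trans h (le_of_lt hwy)) hw.2)
        refine lt_of_le_of_lt (Cardinal.mk_le_mk_of_subset hsub) ?_
        refine lt_of_le_of_lt (Cardinal.mk_union_le _ _) ?_
        exact Cardinal.add_lt_of_lt hκ h2 h1
  · exact Or.inr (rel_trans hκ (rel_trans hκ (rel_symm h1) h) h2)

/-- The setoid of the convex equivalence. -/
def st (κ : Cardinal.{u}) (hκ : ℵ₀ ≤ κ) : Setoid L :=
  ⟨rel κ, ⟨rel_refl κ hκ, rel_symm, rel_trans hκ⟩⟩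

end Stmt0Aux

open Stmt0Aux

/-- A linear order is scattered if the rationals do not embed into it. -/
def IsScattered (L : Type*) [LinearOrder L] : Prop :=
  ¬ ∃ f : ℚ → L, StrictMono f

/-- If `κ` is a regular cardinal and `L` is a scattered linear order of cardinality `κ`,
then either `κ` or its reverse `κ*` embeds into `L`. -/
theorem stmt0 (κ : Cardinal.{u}) (hreg : κ.IsRegular) (L : Type u) [LinearOrder L]
    (hcard : #L = κ) (hscat : IsScattered L) :
    (∃ f : κ.ord.ToType → L, StrictMono f) ∨ (∃ f : κ.ord.ToType → L, StrictAnti f) := by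
  have hκ : ℵ₀ ≤ κ := hreg.aleph0_le
  have hne : Nonempty L := by
    rw [← Cardinal.mk_ne_zero_iff, hcard]
    exact (lt_of_lt_of_le Cardinal.aleph0_pos hκ).ne'
  haveI : Inhabited L := Classical.inhabited_of_nonempty hne
  by_cases hcls : ∀ x : L, #{y | rel κ x y} < κ
  · -- all classes small: build a ℚ embedding, contradicting scatteredness
    exfalso
    apply hscat
    set Qt := Quotient (st (L := L) κ hκ) with hQt
    have wd : ∀ (a b c d : L), rel κ a c → rel κ b d →
        (a ≤ b ∨ rel κ a b) = (c ≤ d ∨ rel κ c d) := by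
      intro a b c d h1 h2
      exact propext ⟨le_wd hκ h1 h2, le_wd hκ (rel_symm h1) (rel_symm h2)⟩
    letI : LE Qt := ⟨Quotient.lift₂ (fun a b => a ≤ b ∨ rel κ a b) wd⟩
    have hle : ∀ x y : L, ((⟦x⟧ : Qt) ≤ ⟦y⟧) ↔ (x ≤ y ∨ rel κ x y) := fun _ _ => Iff.rfl
    letI : Preorder Qt :=
      { lt := fun a b => a ≤ b ∧ ¬ b ≤ a
        le_refl := fun a => by
          induction a using Quotient.ind
          exact Or.inl le_rfl
        le_trans := by
          intro a b c
          induction a using Quotient.ind; induction b using Quotient.ind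
          induction c using Quotient.ind
          rename_i x y z
          rw [hle, hle, hle]
          rintro (hxy | hxy) (hyz | hyz)
          · exact Or.inl (hxy.trans hyz)
          · rcases le_or_gt x z with h | h
            · exact Or.inl h
            · refine Or.inr (rel_symm ?_)
              refine lt_of_le_of_lt (Cardinal.mk_le_mk_of_subset ?_) hyz
              rw [Set.uIcc_of_le h.le]
              intro w hw
              exact Set.mem_uIcc_of_ge hw.1 (le_trans hw.2 hxy)
          · rcases le_or_gt x z with h | h
            · exact Or.inl h
            · refine Or.inr ?_
              refine lt_of_le_of_lt (Cardinal.mk_le_mk_of_subset ?_) (rel_symm hxy)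
              rw [Set.uIcc_comm x z, Set.uIcc_of_le h.le]
              intro w hw
              exact Set.mem_uIcc_of_le (le_trans hyz hw.1) hw.2
          · exact Or.inr (rel_trans hκ hxy hyz) }
    letI : PartialOrder Qt :=
      { le_antisymm := by
          intro a b
          induction a using Quotient.ind; induction b using Quotient.ind
          rename_i x y
          rw [hle, hle]
          rintro (hxy | hxy) (hyx | hyx)
          · exact Quotient.sound (le_antisymm hxy hyx ▸ rel_refl κ hκ x)
          · exact Quotient.sound (rel_symm hyx)
          · exact Quotient.sound hxy
          · exact Quotient.sound hxy }
    letI : LinearOrder Qt :=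
      { le_total := by
          intro a b
          induction a using Quotient.ind; induction b using Quotient.ind
          rename_i x y
          rw [hle, hle]
          rcases le_total x y with h | h
          · exact Or.inl (Or.inl h)
          · exact Or.inr (Or.inl h)
        toDecidableLE := Classical.decRel _ }
    have hlt : ∀ x y : L, ((⟦x⟧ : Qt) < ⟦y⟧) ↔ (x < y ∧ ¬ rel κ x y) := by
      intro x y
      rw [lt_iff_le_not_ge, hle, hle]
      constructor
      · rintro ⟨h1, h2⟩
        push_neg at h2
        have hnr : ¬ rel κ x y := fun h => h2.2 (rel_symm h)
        rcases h1 with h1 | h1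
        · refine ⟨lt_of_le_of_ne h1 ?_, hnr⟩
          rintro rfl
          exact hnr (rel_refl κ hκ x)
        · exact absurd h1 hnr
      · rintro ⟨h1, h2⟩
        refine ⟨Or.inl h1.le, ?_⟩
        rintro (h | h)
        · exact absurd (le_antisymm h1.le h) (fun e => h2 (e ▸ rel_refl κ hκ x))
        · exact h2 (rel_symm h)
    haveI : Nontrivial Qt := by
      obtain ⟨x₀⟩ := hne
      have : {y | rel κ x₀ y} ≠ Set.univ := by
        intro h
        have := hcls x₀
        rw [h, Cardinal.mk_univ, hcard] at this
        exact absurd this (lt_irrefl κ)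
      obtain ⟨y₀, hy₀⟩ := (Set.ne_univ_iff_exists_notMem _).mp this
      exact ⟨⟦x₀⟧, ⟦y₀⟧, fun h => hy₀ (Quotient.exact h)⟩
    haveI : DenselyOrdered Qt := by
      constructor
      intro a b
      induction a using Quotient.ind; induction b using Quotient.ind
      rename_i x y
      intro hab
      rw [hlt] at hab
      obtain ⟨hxy, hnr⟩ := hab
      by_contra hnz
      have hsub : Set.uIcc x y ⊆ {w | rel κ x w} ∪ {w | rel κ y w} := by
        rw [Set.uIcc_of_le hxy.le]
        intro w hw
        by_cases h1 : rel κ x w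
        · exact Or.inl h1
        by_cases h2 : rel κ y w
        · exact Or.inr h2
        exfalso
        have hxw : x < w := lt_of_le_of_ne hw.1 (fun e => h1 (e ▸ rel_refl κ hκ x))
        have hwy : w < y := lt_of_le_of_ne hw.2 (fun e => h2 (e.symm ▸ rel_refl κ hκ y))
        exact hnz ⟨⟦w⟧, (hlt x w).mpr ⟨hxw, h1⟩, (hlt w y).mpr ⟨hwy, fun h => h2 (rel_symm h)⟩⟩
      refine hnr ?_
      rw [rel]
      refine lt_of_le_of_lt (Cardinal.mk_le_mk_of_subset hsub) ?_
      refine lt_of_le_of_lt (Cardinal.mk_union_le _ _) ?_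
      exact Cardinal.add_lt_of_lt hκ (hcls x) (hcls y)
    obtain ⟨e⟩ : Nonempty (ℚ ↪o Qt) := Order.embedding_from_countable_to_dense ℚ Qt
    refine ⟨fun q => (e q).out, fun q q' hq => ?_⟩
    have he : e q < e q' := e.strictMono hq
    have h1 : (⟦(e q).out⟧ : Qt) < ⟦(e q').out⟧ := by
      rw [Quotient.out_eq, Quotient.out_eq]
      exact he
    exact ((hlt _ _).mp h1).1
  · -- some class big: extract a long increasing or decreasing sequence
    push_neg at hcls
    obtain ⟨x, hx⟩ := hcls
    set Ap : Set L := {y | rel κ x y ∧ x < y} with hAp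
    set Am : Set L := {y | rel κ x y ∧ y < x} with hAm
    have hcover : {y | rel κ x y} ⊆ Am ∪ {x} ∪ Ap := by
      intro y hy
      rcases lt_trichotomy y x with h | h | h
      · exact Or.inl (Or.inl ⟨hy, h⟩)
      · exact Or.inl (Or.inr h)
      · exact Or.inr ⟨hy, h⟩
    by_cases hp : κ ≤ #Ap
    · left
      refine exists_strictMono κ hreg Ap hp ?_
      intro s hs
      refine lt_of_le_of_lt (Cardinal.mk_le_mk_of_subset ?_) hs.1
      intro w hw
      exact Set.mem_uIcc_of_le hw.1.2.le hw.2
    · by_cases hm : κ ≤ #Am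
      · right
        have hd := exists_strictMono (L := Lᵒᵈ) κ hreg
          (OrderDual.ofDual ⁻¹' Am) (by exact hm) ?_
        · obtain ⟨f, hf⟩ := hd
          exact ⟨fun i => OrderDual.ofDual (f i), fun a b hab => hf hab⟩
        · intro s hs
          have hsub : {w | w ∈ OrderDual.ofDual ⁻¹' Am ∧ w ≤ s} ⊆
              OrderDual.ofDual ⁻¹' (Set.uIcc x (OrderDual.ofDual s)) := by
            intro w hw
            have h1 : OrderDual.ofDual s ≤ OrderDual.ofDual w := hw.2
            have h2 : OrderDual.ofDual w < x := hw.1.2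
            rw [Set.mem_preimage]
            exact Set.mem_uIcc_of_ge h1 h2.le
          refine lt_of_le_of_lt (Cardinal.mk_le_mk_of_subset hsub) ?_
          refine lt_of_le_of_lt (Cardinal.mk_preimage_of_injective _ _
            (fun a b h => h : Function.Injective (OrderDual.ofDual (α := L)))) hs.1
      · exfalso
        push_neg at hp hm
        have : #{y | rel κ x y} < κ := by
          refine lt_of_le_of_lt (Cardinal.mk_le_mk_of_subset hcover) ?_
          refine lt_of_le_of_lt (Cardinal.mk_union_le _ _) ?_
          refine Cardinal.add_lt_of_lt hκ ?_ hp
          refine lt_of_le_of_lt (Cardinal.mk_union_le _ _) ?_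
          refine Cardinal.add_lt_of_lt hκ hm ?_
          rw [Cardinal.mk_singleton]
          exact lt_of_lt_of_le Cardinal.one_lt_aleph0 hκ
        exact absurd hx (not_le.mpr this)
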